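/- Let K = {(x,y,z) ∈ ℝ³ : x² + y² ≤ 1, |z| ≤ 1} be the origin-symmetric solid cylinder of height 2 and radius 1, and let L be the closed unit ball of ℝ³. Then r_o(K,L) = 1, R_o(K,L) = √2, and K is in the class ℜ₁ with respect to L: with W₀ = 2π, W₁ = 2π, W₂ = π(π+2)/3 the relative quermassintegrals of K with respect to L, one has B₀(r) = 4π r − 2π − (π(π+2)/3) r² ≥ 0 for all r ∈ [1, √2]. -/

import Mathlib

open scoped Pointwise RealInnerProductSpace
open MeasureTheory Metric

noncomputable section

/-- The support function `h_K(u) = sup_{x ∈ K} ⟨x, u⟩` of a set `K ⊆ ℝ³`. -/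
def supp (K : Set (EuclideanSpace ℝ (Fin 3))) (u : EuclideanSpace ℝ (Fin 3)) : ℝ :=
  sSup ((fun x => ⟪x, u⟫) '' K)

/-- `r_o(K,L) = min_{u ∈ S²} h_K(u)/h_L(u)`. -/
def rIn (K L : Set (EuclideanSpace ℝ (Fin 3))) : ℝ :=
  sInf ((fun u => supp K u / supp L u) '' sphere (0 : EuclideanSpace ℝ (Fin 3)) 1)

/-- `R_o(K,L) = max_{u ∈ S²} h_K(u)/h_L(u)`. -/
def rOut (K L : Set (EuclideanSpace ℝ (Fin 3))) : ℝ :=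
  sSup ((fun u => supp K u / supp L u) '' sphere (0 : EuclideanSpace ℝ (Fin 3)) 1)

open Real

abbrev E := EuclideanSpace ℝ (Fin 3)

lemma inner3 (x u : E) : ⟪x,u⟫ = x 0 * u 0 + x 1 * u 1 + x 2 * u 2 := by
  simp [PiLp.inner_apply, Fin.sum_univ_three, RCLike.inner_apply]; ring

lemma norm3 (x : E) : ‖x‖ = Real.sqrt ((x 0)^2 + (x 1)^2 + (x 2)^2) := by
  rw [EuclideanSpace.norm_eq]; simp [Fin.sum_univ_three]

-- supp K is greatest
lemma suppK (u : E) :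
    IsGreatest ((fun x => ⟪x,u⟫) '' {x : E | (x 0)^2 + (x 1)^2 ≤ 1 ∧ |x 2| ≤ 1})
      (Real.sqrt ((u 0)^2 + (u 1)^2) + |u 2|) := by
  set s := Real.sqrt ((u 0)^2 + (u 1)^2) with hs
  have hs0 : 0 ≤ s := Real.sqrt_nonneg _
  have hssq : s^2 = (u 0)^2 + (u 1)^2 := Real.sq_sqrt (by positivity)
  constructor
  · -- membership
    set c : ℝ := if 0 ≤ u 2 then 1 else -1 with hc
    have hc1 : |c| ≤ 1 := by rw [hc]; split <;> simp
    have hcu : c * u 2 = |u 2| := by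
      rw [hc]; split <;> rename_i h
      · rw [abs_of_nonneg h]; ring
      · rw [abs_of_neg (lt_of_not_ge h)]; ring
    rcases eq_or_lt_of_le hs0 with h0 | h0
    · refine ⟨WithLp.toLp 2 (![0,0,c] : Fin 3 → ℝ), ⟨by norm_num, by simpa using hc1⟩, ?_⟩
      beta_reduce; rw [inner3]; simp; rw [hcu, ← h0]; ring
    · refine ⟨WithLp.toLp 2 (![u 0 / s, u 1 / s, c] : Fin 3 → ℝ), ⟨?_, by simpa using hc1⟩, ?_⟩
      · show (u 0 / s)^2 + (u 1 / s)^2 ≤ 1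
        rw [div_pow, div_pow, ← add_div, ← hssq, div_self (by positivity)]
      · beta_reduce; rw [inner3]; show u 0 / s * u 0 + u 1 / s * u 1 + c * u 2 = s + |u 2|
        rw [hcu]
        field_simp
        nlinarith [hssq]
  · rintro y ⟨x, ⟨hx1, hx2⟩, rfl⟩
    simp only
    rw [inner3]
    have h1 : x 0 * u 0 + x 1 * u 1 ≤ s := by
      have hsq : (x 0 * u 0 + x 1 * u 1)^2 ≤ s^2 := by
        rw [hssq]; nlinarith [sq_nonneg (x 0 * u 1 - x 1 * u 0), sq_nonneg (u 0), sq_nonneg (u 1)]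
      calc x 0 * u 0 + x 1 * u 1 ≤ |x 0 * u 0 + x 1 * u 1| := le_abs_self _
        _ = Real.sqrt ((x 0 * u 0 + x 1 * u 1)^2) := (Real.sqrt_sq_eq_abs _).symm
        _ ≤ Real.sqrt (s^2) := Real.sqrt_le_sqrt hsq
        _ = s := Real.sqrt_sq hs0
    have h2 : x 2 * u 2 ≤ |u 2| := by
      calc x 2 * u 2 ≤ |x 2 * u 2| := le_abs_self _
        _ = |x 2| * |u 2| := abs_mul _ _
        _ ≤ 1 * |u 2| := by gcongr
        _ = |u 2| := one_mul _
    linarith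

lemma suppL (u : E) (hu : ‖u‖ = 1) :
    IsGreatest ((fun x => ⟪x,u⟫) '' closedBall (0:E) 1) 1 := by
  constructor
  · exact ⟨u, by simp [hu], by beta_reduce; rw [real_inner_self_eq_norm_sq, hu]; norm_num⟩
  · rintro y ⟨x, hx, rfl⟩
    simp only
    calc ⟪x,u⟫ ≤ ‖x‖ * ‖u‖ := real_inner_le_norm _ _
      _ ≤ 1 * 1 := by
          rw [mem_closedBall, dist_zero_right] at hx
          exact mul_le_mul hx hu.le (norm_nonneg _) zero_le_one
      _ = 1 := one_mul 1


/-- For the solid cylinder `K = {x² + y² ≤ 1, |z| ≤ 1}` and the closed unit ball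
`L` in `ℝ³`, one has `r_o(K,L) = 1`, `R_o(K,L) = √2`, and `K` is in the class `ℜ₁` with
respect to `L`: with `W₀ = 2π`, `W₁ = 2π`, `W₂ = π(π+2)/3` the relative quermassintegrals of
`K` with respect to `L`, `B₀(r) = 4πr − 2π − (π(π+2)/3) r² ≥ 0` for all `r ∈ [1, √2]`. -/
theorem cylinder_in_class_R1_wrt_ball
    (K L : Set (EuclideanSpace ℝ (Fin 3)))
    (hK : K = {x : EuclideanSpace ℝ (Fin 3) | (x 0) ^ 2 + (x 1) ^ 2 ≤ 1 ∧ |x 2| ≤ 1})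
    (hL : L = closedBall (0 : EuclideanSpace ℝ (Fin 3)) 1) :
    rIn K L = 1 ∧ rOut K L = Real.sqrt 2 ∧
      ∀ r ∈ Set.Icc (1 : ℝ) (Real.sqrt 2),
        4 * π * r - 2 * π - (π * (π + 2) / 3) * r ^ 2 ≥ 0 := by
  subst hK hL
  have hval : ∀ u : E, u ∈ sphere (0:E) 1 →
      supp {x : E | (x 0)^2 + (x 1)^2 ≤ 1 ∧ |x 2| ≤ 1} u / supp (closedBall (0:E) 1) u
        = Real.sqrt (1 - |u 2|^2) + |u 2| ∧ |u 2| ≤ 1 := by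
    intro u hu
    rw [mem_sphere_zero_iff_norm] at hu
    have hsum : (u 0)^2 + (u 1)^2 + (u 2)^2 = 1 := by
      have h := norm3 u
      rw [hu] at h
      have h2 := congrArg (· ^ 2) h
      simp only [one_pow] at h2
      rw [Real.sq_sqrt (by positivity : (0:ℝ) ≤ (u 0)^2 + (u 1)^2 + (u 2)^2)] at h2
      linarith
    have h1 : supp {x : E | (x 0)^2 + (x 1)^2 ≤ 1 ∧ |x 2| ≤ 1} u
        = Real.sqrt ((u 0)^2 + (u 1)^2) + |u 2| := (suppK u).csSup_eq
    have h2 : supp (closedBall (0:E) 1) u = 1 := (suppL u hu).csSup_eq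
    have ha : (u 0)^2 + (u 1)^2 = 1 - |u 2|^2 := by rw [sq_abs]; linarith
    refine ⟨by rw [h1, h2, div_one, ha], ?_⟩
    have : (u 2)^2 ≤ 1 := by nlinarith [sq_nonneg (u 0), sq_nonneg (u 1)]
    rw [← sq_abs] at this
    nlinarith [abs_nonneg (u 2)]
  refine ⟨?_, ?_, ?_⟩
  · -- rIn = 1
    apply IsLeast.csInf_eq
    constructor
    · -- witness u = (0,0,1)
      refine ⟨WithLp.toLp 2 (![0,0,1] : Fin 3 → ℝ), ?_, ?_⟩
      · rw [mem_sphere_zero_iff_norm, norm3]; norm_num [Matrix.cons_val_two, Matrix.tail_cons, Matrix.head_cons]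
      · have := (hval (WithLp.toLp 2 (![0,0,1] : Fin 3 → ℝ))
          (by rw [mem_sphere_zero_iff_norm, norm3]; norm_num [Matrix.cons_val_two, Matrix.tail_cons, Matrix.head_cons])).1
        simp only at this ⊢
        rw [this]
        norm_num [Matrix.cons_val_two, Matrix.tail_cons, Matrix.head_cons]
    · rintro y ⟨u, hu, rfl⟩
      obtain ⟨hv, ht⟩ := hval u hu
      simp only at hv ⊢
      rw [hv]
      set t := |u 2| with htdef
      have ht0 : 0 ≤ t := abs_nonneg _
      have key : (1:ℝ) - t ≤ Real.sqrt (1 - t^2) := by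
        calc (1:ℝ) - t = Real.sqrt ((1-t)^2) := by rw [Real.sqrt_sq (by linarith)]
          _ ≤ Real.sqrt (1 - t^2) := Real.sqrt_le_sqrt (by nlinarith)
      linarith
  · -- rOut = √2
    apply IsGreatest.csSup_eq
    constructor
    · refine ⟨WithLp.toLp 2 (![Real.sqrt 2/2, 0, Real.sqrt 2/2] : Fin 3 → ℝ), ?_, ?_⟩
      · rw [mem_sphere_zero_iff_norm, norm3]
        simp only [WithLp.ofLp_toLp, Matrix.cons_val_zero, Matrix.cons_val_one, Matrix.head_cons,
          Matrix.cons_val_two, Matrix.tail_cons]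
        rw [div_pow, Real.sq_sqrt (by norm_num : (0:ℝ) ≤ 2)]
        norm_num
      · have := (hval (WithLp.toLp 2 (![Real.sqrt 2/2, 0, Real.sqrt 2/2] : Fin 3 → ℝ))
          (by rw [mem_sphere_zero_iff_norm, norm3]
              simp only [WithLp.ofLp_toLp, Matrix.cons_val_zero, Matrix.cons_val_one, Matrix.head_cons,
                Matrix.cons_val_two, Matrix.tail_cons]
              rw [div_pow, Real.sq_sqrt (by norm_num : (0:ℝ) ≤ 2)]
              norm_num)).1
        simp only at this ⊢
        rw [this]
        have e : (![Real.sqrt 2/2, 0, Real.sqrt 2/2] : Fin 3 → ℝ) 2 = Real.sqrt 2/2 := rfl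
        rw [e]
        have h2 : (0:ℝ) ≤ Real.sqrt 2 / 2 := by positivity
        rw [abs_of_nonneg h2]
        rw [show (1:ℝ) - (Real.sqrt 2/2)^2 = (Real.sqrt 2/2)^2 by
          rw [div_pow, Real.sq_sqrt (by norm_num : (0:ℝ) ≤ 2)]; norm_num]
        rw [Real.sqrt_sq h2]
        ring
    · rintro y ⟨u, hu, rfl⟩
      obtain ⟨hv, ht⟩ := hval u hu
      simp only at hv ⊢
      rw [hv]
      set t := |u 2| with htdef
      have ht0 : 0 ≤ t := abs_nonneg _
      have hs2 : (1:ℝ) ≤ Real.sqrt 2 := by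
        rw [show (1:ℝ) = Real.sqrt 1 by simp]; exact Real.sqrt_le_sqrt (by norm_num)
      have key : Real.sqrt (1 - t^2) ≤ Real.sqrt 2 - t := by
        calc Real.sqrt (1 - t^2) ≤ Real.sqrt ((Real.sqrt 2 - t)^2) := by
              apply Real.sqrt_le_sqrt
              nlinarith [sq_nonneg (Real.sqrt 2 * t - 1), Real.sq_sqrt (by norm_num : (0:ℝ) ≤ 2)]
          _ = Real.sqrt 2 - t := Real.sqrt_sq (by linarith)
      linarith
  · intro r hr
    obtain ⟨hr1, hr2⟩ := hr
    have hs2 : Real.sqrt 2 ^ 2 = 2 := Real.sq_sqrt (by norm_num)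
    have hsn : (0:ℝ) ≤ Real.sqrt 2 := Real.sqrt_nonneg 2
    have h2 : r^2 ≤ 2 := by nlinarith
    have hπ : π < 3.15 := Real.pi_lt_d2
    have hπ' : 3.141592 < π := Real.pi_gt_d6
    have hs14 : (1.414:ℝ) < Real.sqrt 2 := by nlinarith
    have key : 12*r - 6 - (π+2)*r^2 ≥ 0 := by
      nlinarith [mul_nonneg (sub_nonneg.2 hr1) (sub_nonneg.2 hr2), sub_nonneg.2 hr2,
        sub_nonneg.2 hr1]
    nlinarith [mul_nonneg Real.pi_pos.le key]
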